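/- If X and Y are jointly Gaussian standard normal random variables with correlation ρ = E[XY], then E[Hₙ(X) Hₘ(Y)] = δ_{n,m} · n! · ρⁿ, where Hₙ denotes the nth probabilists' Hermite polynomial. -/

import Mathlib

open MeasureTheory ProbabilityTheory Polynomial Real Filter
open scoped NNReal ENNReal



noncomputable def gm : ℕ → ℝ
  | 0 => 1
  | 1 => 0
  | n + 2 => ((n : ℝ) + 1) * gm n

@[simp] lemma gm_zero : gm 0 = 1 := rfl
@[simp] lemma gm_one : gm 1 = 0 := rfl
lemma gm_step (n : ℕ) : gm (n + 2) = ((n : ℝ) + 1) * gm n := rfl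

lemma integrable_pow_gauss (N : ℕ) :
    Integrable fun x : ℝ => x ^ N * rexp (-(1/2) * x ^ 2) := by
  have h := integrable_rpow_mul_exp_neg_mul_sq (b := 1/2) (by norm_num)
    (s := (N : ℝ)) (lt_of_lt_of_le (by norm_num) (Nat.cast_nonneg N))
  simpa [Real.rpow_natCast] using h

lemma tendsto_pow_gauss_top (k : ℕ) :
    Tendsto (fun x : ℝ => x ^ k * rexp (-(1/2) * x ^ 2)) atTop (nhds 0) := by
  have h := rpow_mul_exp_neg_mul_sq_isLittleO_exp_neg (b := 1/2) (by norm_num) (k : ℝ)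
  simp only [Real.rpow_natCast] at h
  apply h.trans_tendsto
  have h2 : Tendsto (fun x : ℝ => -(1/2) * x) atTop atBot := by
    apply Tendsto.const_mul_atTop_of_neg (by norm_num : (-(1/2) : ℝ) < 0) tendsto_id
  exact Real.tendsto_exp_atBot.comp h2

lemma tendsto_pow_gauss_bot (k : ℕ) :
    Tendsto (fun x : ℝ => x ^ k * rexp (-(1/2) * x ^ 2)) atBot (nhds 0) := by
  have h1 : Tendsto (fun x : ℝ => (-x) ^ k * rexp (-(1/2) * (-x) ^ 2)) atBot (nhds 0) :=
    (tendsto_pow_gauss_top k).comp tendsto_neg_atBot_atTop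
  have h2 := h1.const_mul ((-1 : ℝ) ^ k)
  simp only [mul_zero] at h2
  convert h2 using 2 with x
  rw [← mul_assoc, ← mul_pow, neg_sq]
  ring_nf

noncomputable def gInt (N : ℕ) : ℝ := ∫ x : ℝ, x ^ N * rexp (-(1/2) * x ^ 2)

lemma hasDerivAt_gauss (x : ℝ) :
    HasDerivAt (fun x : ℝ => rexp (-(1/2) * x ^ 2)) (rexp (-(1/2) * x ^ 2) * (-(1/2) * (2 * x))) x := by
  have hx : HasDerivAt (fun x : ℝ => -(1/2) * x ^ 2) (-(1/2) * (2 * x)) x := by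
    simpa using (hasDerivAt_pow 2 x).const_mul (-(1/2) : ℝ)
  exact hx.exp

lemma gInt_step (N : ℕ) : gInt (N + 2) = ((N : ℝ) + 1) * gInt N := by
  have hF : ∀ x : ℝ, HasDerivAt (fun x : ℝ => -(x ^ (N+1) * rexp (-(1/2) * x ^ 2)))
      (x ^ (N+2) * rexp (-(1/2) * x ^ 2) - ((N : ℝ) + 1) * (x ^ N * rexp (-(1/2) * x ^ 2))) x := by
    intro x
    have h1 : HasDerivAt (fun x : ℝ => x ^ (N+1)) (((N : ℝ) + 1) * x ^ N) x := by
      simpa using hasDerivAt_pow (N+1) x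
    have := (h1.mul (hasDerivAt_gauss x)).fun_neg
    refine this.congr_deriv ?_
    ring
  have hInt : Integrable (fun x : ℝ => x ^ (N+2) * rexp (-(1/2) * x ^ 2)
      - ((N : ℝ) + 1) * (x ^ N * rexp (-(1/2) * x ^ 2))) :=
    (integrable_pow_gauss (N+2)).sub ((integrable_pow_gauss N).const_mul _)
  have hbot : Tendsto (fun x : ℝ => -(x ^ (N+1) * rexp (-(1/2) * x ^ 2))) atBot (nhds 0) := by
    simpa using (tendsto_pow_gauss_bot (N+1)).neg
  have htop : Tendsto (fun x : ℝ => -(x ^ (N+1) * rexp (-(1/2) * x ^ 2))) atTop (nhds 0) := by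
    simpa using (tendsto_pow_gauss_top (N+1)).neg
  have h0 := integral_of_hasDerivAt_of_tendsto hF hInt hbot htop
  rw [integral_sub (integrable_pow_gauss (N+2)) ((integrable_pow_gauss N).const_mul _),
    integral_const_mul] at h0
  have : gInt (N+2) - ((N:ℝ)+1) * gInt N = 0 - 0 := h0
  linarith

lemma gInt_one : gInt 1 = 0 := by
  have hF : ∀ x : ℝ, HasDerivAt (fun x : ℝ => -(rexp (-(1/2) * x ^ 2)))
      (x ^ 1 * rexp (-(1/2) * x ^ 2)) x := by
    intro x
    have := (hasDerivAt_gauss x).fun_neg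
    refine this.congr_deriv ?_
    ring
  have hbot : Tendsto (fun x : ℝ => -(rexp (-(1/2) * x ^ 2))) atBot (nhds 0) := by
    have := (tendsto_pow_gauss_bot 0).neg
    simpa using this
  have htop : Tendsto (fun x : ℝ => -(rexp (-(1/2) * x ^ 2))) atTop (nhds 0) := by
    have := (tendsto_pow_gauss_top 0).neg
    simpa using this
  have h0 := integral_of_hasDerivAt_of_tendsto hF (integrable_pow_gauss 1) hbot htop
  simpa [gInt] using h0

lemma gInt_zero : gInt 0 = √(2 * π) := by
  have h := integral_gaussian (1/2)
  simp only [gInt, pow_zero, one_mul]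
  rw [h, show π / (1/2 : ℝ) = 2 * π by ring]

lemma gInt_eq (N : ℕ) : gInt N = √(2 * π) * gm N := by
  induction N using Nat.twoStepInduction with
  | zero => simp [gInt_zero]
  | one => simp [gInt_one]
  | more n h1 _ => rw [gInt_step, h1, gm_step]; ring

lemma gInt_eq' (N : ℕ) : (∫ x : ℝ, x ^ N * rexp (-(1/2) * x ^ 2)) = √(2 * π) * gm N :=
  gInt_eq N





lemma gaussianPDFReal_std (x : ℝ) :
    gaussianPDFReal 0 1 x = (√(2 * π))⁻¹ * rexp (-(1/2) * x ^ 2) := by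
  rw [gaussianPDFReal]
  push_cast
  rw [sub_zero, mul_one]
  congr 1
  ring

lemma gaussianReal_std_eq :
    gaussianReal 0 1 = volume.withDensity
      (fun x => ((((√(2 * π))⁻¹ * rexp (-(1/2) * x ^ 2)).toNNReal : ℝ≥0) : ℝ≥0∞)) := by
  rw [gaussianReal_of_var_ne_zero 0 one_ne_zero]
  congr 1
  funext x
  rw [gaussianPDF_def]
  simp only [ENNReal.ofReal, gaussianPDFReal_std]

lemma pdf_std_nonneg (x : ℝ) : 0 ≤ (√(2 * π))⁻¹ * rexp (-(1/2) * x ^ 2) := by positivity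

lemma integrable_pow_gaussianReal_std (N : ℕ) :
    Integrable (fun x => x ^ N) (gaussianReal 0 1) := by
  rw [gaussianReal_std_eq]
  rw [integrable_withDensity_iff]
  · apply Integrable.congr (((integrable_pow_gauss N).const_mul ((√(2 * π))⁻¹)))
    filter_upwards with x
    rw [ENNReal.coe_toReal, Real.coe_toNNReal _ (pdf_std_nonneg x)]
    ring
  · measurability
  · filter_upwards with x using ENNReal.coe_lt_top

lemma integral_pow_gaussianReal_std (N : ℕ) :
    ∫ x, x ^ N ∂(gaussianReal 0 1) = gm N := by
  rw [gaussianReal_std_eq]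
  rw [integral_withDensity_eq_integral_smul (by measurability)]
  have : ∀ x : ℝ, (((√(2 * π))⁻¹ * rexp (-(1/2) * x ^ 2)).toNNReal : ℝ≥0) • x ^ N
      = (√(2 * π))⁻¹ * (x ^ N * rexp (-(1/2) * x ^ 2)) := by
    intro x
    rw [NNReal.smul_def, smul_eq_mul, Real.coe_toNNReal _ (pdf_std_nonneg x)]
    ring
  rw [MeasureTheory.integral_congr_ae (Filter.Eventually.of_forall this), integral_const_mul,
    gInt_eq']
  rw [← mul_assoc, inv_mul_cancel₀ (by positivity), one_mul]

lemma gaussianReal_eq_map (w : ℝ≥0) :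
    Measure.map (fun x => √(w : ℝ) * x) (gaussianReal 0 1) = gaussianReal 0 w := by
  rw [gaussianReal_map_const_mul]
  congr 1
  · simp
  · apply NNReal.coe_injective
    simp [Real.sq_sqrt w.2]

lemma integrable_pow_gaussianReal (w : ℝ≥0) (N : ℕ) :
    Integrable (fun x => x ^ N) (gaussianReal 0 w) := by
  rw [← gaussianReal_eq_map w]
  rw [integrable_map_measure (by apply Measurable.aestronglyMeasurable; measurability)
    (measurable_const_mul _).aemeasurable]
  apply Integrable.congr ((integrable_pow_gaussianReal_std N).const_mul ((√(w:ℝ)) ^ N))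
  filter_upwards with x
  simp [Function.comp, mul_pow]

lemma integral_pow_gaussianReal (w : ℝ≥0) (N : ℕ) :
    ∫ x, x ^ N ∂(gaussianReal 0 w) = (√(w : ℝ)) ^ N * gm N := by
  rw [← gaussianReal_eq_map w]
  rw [integral_map (measurable_const_mul _).aemeasurable
    (by apply Measurable.aestronglyMeasurable; measurability)]
  simp only [mul_pow]
  rw [integral_const_mul, integral_pow_gaussianReal_std]



noncomputable def qP (ρ : ℝ) : Polynomial ℝ := X ^ 2 + C (2 * ρ) * X + 1

noncomputable def pP (ρ : ℝ) : ℕ → Polynomial ℝ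
  | 0 => 1
  | 1 => 0
  | n + 2 => C ((n : ℝ) + 1) * (qP ρ * pP ρ n)

lemma qP_eval (ρ t : ℝ) : eval t (qP ρ) = 1 + 2 * t * ρ + t ^ 2 := by
  simp [qP]; ring

lemma pP_eval (ρ t : ℝ) (h : 0 ≤ 1 + 2 * t * ρ + t ^ 2) (N : ℕ) :
    eval t (pP ρ N) = (√(1 + 2 * t * ρ + t ^ 2)) ^ N * gm N := by
  induction N using Nat.twoStepInduction with
  | zero => simp [pP, gm]
  | one => simp [pP, gm]
  | more n h1 _ =>
    show eval t (C ((n : ℝ) + 1) * (qP ρ * pP ρ n)) = _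
    rw [eval_mul, eval_mul, eval_C, qP_eval, h1,
      show gm (n + 2) = ((n : ℝ) + 1) * gm n from rfl,
      show (√(1 + 2*t*ρ + t^2)) ^ (n+2)
        = (√(1 + 2*t*ρ + t^2)) ^ n * (√(1 + 2*t*ρ + t^2) * √(1 + 2*t*ρ + t^2)) from by ring,
      mul_self_sqrt h]
    ring

lemma qP_natDegree_le (ρ : ℝ) : (qP ρ).natDegree ≤ 2 := by
  unfold qP; compute_degree

lemma pP_natDegree_le (ρ : ℝ) (N : ℕ) : (pP ρ N).natDegree ≤ N := by
  induction N using Nat.twoStepInduction with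
  | zero => simp [pP]
  | one => simp [pP]
  | more n h1 _ =>
    show (C ((n : ℝ) + 1) * (qP ρ * pP ρ n)).natDegree ≤ n + 2
    apply le_trans (natDegree_mul_le)
    have h2 := natDegree_mul_le (p := qP ρ) (q := pP ρ n)
    have h3 := qP_natDegree_le ρ
    simp only [natDegree_C, zero_add]
    omega

lemma pP_coeff_zero (ρ : ℝ) (N : ℕ) : (pP ρ N).coeff 0 = gm N := by
  induction N using Nat.twoStepInduction with
  | zero => simp [pP, gm]
  | one => simp [pP, gm]
  | more n h1 _ =>
    show (C ((n : ℝ) + 1) * (qP ρ * pP ρ n)).coeff 0 = gm (n + 2)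
    rw [mul_coeff_zero, mul_coeff_zero, coeff_C_zero, h1]
    have : (qP ρ).coeff 0 = 1 := by simp [qP]
    rw [this, one_mul]
    rfl

lemma pP_coeff_top (ρ : ℝ) (N : ℕ) : (pP ρ N).coeff N = gm N := by
  induction N using Nat.twoStepInduction with
  | zero => simp [pP, gm]
  | one => show (0 : Polynomial ℝ).coeff 1 = gm 1; simp
  | more n h1 _ =>
    show (C ((n : ℝ) + 1) * (qP ρ * pP ρ n)).coeff (n + 2) = gm (n + 2)
    rw [coeff_C_mul]
    have hdeg := pP_natDegree_le ρ n
    have e1 : (qP ρ * pP ρ n).coeff (n + 2) = (pP ρ n).coeff n := by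
      show ((X ^ 2 + C (2 * ρ) * X + 1) * pP ρ n).coeff (n + 2) = _
      rw [add_mul, add_mul, coeff_add, coeff_add, one_mul]
      have c1 : (X ^ 2 * pP ρ n).coeff (n + 2) = (pP ρ n).coeff n := by
        rw [mul_comm, coeff_mul_X_pow]
      have c2 : (C (2 * ρ) * X * pP ρ n).coeff (n + 2) = 0 := by
        rw [mul_assoc, coeff_C_mul, coeff_X_mul,
          coeff_eq_zero_of_natDegree_lt (show (pP ρ n).natDegree < n + 1 by omega)]
        ring
      rw [c1, c2, coeff_eq_zero_of_natDegree_lt (show (pP ρ n).natDegree < n + 2 by omega)]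
      ring
    rw [e1, h1]
    rfl

lemma qP_derivative (ρ : ℝ) : derivative (qP ρ) = C 2 * (X + C ρ) := by
  unfold qP
  rw [derivative_add, derivative_add, derivative_one, derivative_X_pow, derivative_C_mul,
    derivative_X, C_mul]
  norm_num
  ring

lemma pP_derivative (ρ : ℝ) (N : ℕ) :
    derivative (pP ρ (N + 2)) = C (((N : ℝ) + 1) * ((N : ℝ) + 2)) * ((X + C ρ) * pP ρ N) := by
  induction N using Nat.twoStepInduction with
  | zero =>
    have hu : pP ρ (0 + 2) = C (((0:ℕ) : ℝ) + 1) * (qP ρ * pP ρ 0) := rfl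
    rw [hu, show pP ρ 0 = 1 from rfl]
    simp [qP_derivative]
  | one =>
    have hu : pP ρ (1 + 2) = C (((1:ℕ) : ℝ) + 1) * (qP ρ * pP ρ 1) := rfl
    rw [hu, show pP ρ 1 = 0 from rfl]
    simp
  | more n h1 _ =>
    have hu : pP ρ (n + 2 + 2) = C (((n + 2 : ℕ) : ℝ) + 1) * (qP ρ * pP ρ (n + 2)) := rfl
    have c1 : ((n + 2 : ℕ) : ℝ) = (n : ℝ) + 2 := by push_cast; ring
    rw [hu, c1, derivative_C_mul, derivative_mul, h1, qP_derivative]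
    have h2 : pP ρ (n + 2) = C (((n:ℕ) : ℝ) + 1) * (qP ρ * pP ρ n) := rfl
    rw [h2]
    have e1 : C (((n:ℝ) + 1) * ((n:ℝ) + 2)) = C ((n:ℝ) + 1) * C ((n:ℝ) + 2) := by rw [C_mul]
    have e2 : C (((n:ℝ) + 2 + 1) * ((n:ℝ) + 2 + 2))
        = C ((n:ℝ) + 2 + 1) * (C 2 + C ((n:ℝ) + 2)) := by
      rw [← C_add, ← C_mul]
      congr 1
      ring
    rw [e1, e2]
    ring







lemma stein_of_coeff (ρ : ℝ) (M : ℕ → ℕ → ℝ)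
    (hc : ∀ j k : ℕ, (((j+k).choose k : ℕ) : ℝ) * M j k = (pP ρ (j+k)).coeff k) :
    ∀ j k : ℕ, M j (k+1) = (k:ℝ) * M j (k-1) + (j:ℝ) * ρ * M (j-1) k := by
  intro j k
  cases hN : j + k with
  | zero =>
    have hj : j = 0 := by omega
    have hk : k = 0 := by omega
    subst hj; subst hk
    have h01 := hc 0 1
    rw [show pP ρ (0+1) = 0 from rfl] at h01
    simp only [coeff_zero, Nat.zero_add, Nat.choose_self, Nat.cast_one, one_mul] at h01
    simp [h01]
  | succ Nd =>
    have hD := pP_derivative ρ Nd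
    rw [show ((X + C ρ) * pP ρ Nd : Polynomial ℝ) = X * pP ρ Nd + C ρ * pP ρ Nd
      from add_mul _ _ _] at hD
    have hcoeff := congrArg (fun f => Polynomial.coeff f k) hD
    simp only [coeff_derivative, coeff_C_mul, coeff_add] at hcoeff
    have hL : (((Nd+2).choose (k+1) : ℕ) : ℝ) * M j (k+1) = (pP ρ (Nd+2)).coeff (k+1) := by
      have := hc j (k+1)
      rwa [show j + (k+1) = Nd + 2 by omega] at this
    have hA : (((Nd+1 : ℕ)) : ℝ) * (X * pP ρ Nd).coeff k
        = (k:ℝ) * (((Nd+1).choose k : ℕ) : ℝ) * M j (k-1) := by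
      cases k with
      | zero => simp [mul_coeff_zero]
      | succ k' =>
        rw [coeff_X_mul]
        have hjk := hc j k'
        rw [show j + k' = Nd by omega] at hjk
        rw [← hjk]
        simp only [Nat.add_sub_cancel]
        have hch' := congrArg (fun m : ℕ => (m : ℝ)) (Nat.add_one_mul_choose_eq Nd k')
        push_cast at hch' ⊢
        linear_combination (M j k') * hch'
    have hB : (((Nd+1 : ℕ)) : ℝ) * (pP ρ Nd).coeff k
        = (j:ℝ) * (((Nd+1).choose k : ℕ) : ℝ) * M (j-1) k := by
      cases j with
      | zero =>
        rw [coeff_eq_zero_of_natDegree_lt (lt_of_le_of_lt (pP_natDegree_le ρ Nd) (by omega))]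
        simp
      | succ j' =>
        have hjk := hc j' k
        rw [show j' + k = Nd by omega] at hjk
        rw [← hjk]
        have hch := Nat.choose_mul_succ_eq Nd k
        have hj' : (Nd + 1 - k : ℕ) = j' + 1 := by omega
        rw [hj'] at hch
        simp only [Nat.add_sub_cancel]
        have hch' := congrArg (fun m : ℕ => (m : ℝ)) hch
        push_cast at hch' ⊢
        linear_combination (M j' k) * hch'
    have hone : ((k:ℝ)+1) * (((Nd+2).choose (k+1) : ℕ) : ℝ)
        = (((Nd+2):ℕ):ℝ) * (((Nd+1).choose k : ℕ) : ℝ) := by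
      have h' := congrArg (fun m : ℕ => (m : ℝ)) (Nat.add_one_mul_choose_eq (Nd+1) k)
      push_cast at h' ⊢
      linarith
    have hD0 : ((((Nd+2):ℕ):ℝ) * (((Nd+1).choose k : ℕ) : ℝ)) ≠ 0 := by
      apply mul_ne_zero
      · positivity
      · have : 0 < (Nd+1).choose k := Nat.choose_pos (by omega)
        positivity
    apply mul_left_cancel₀ hD0
    push_cast at hcoeff hL hA hB hone ⊢
    linear_combination (-(M j (k+1))) * hone + ((k:ℝ)+1) * hL + hcoeff
      + ((Nd:ℝ)+2) * hA + (((Nd:ℝ)+2) * ρ) * hB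



/-- Real-coefficient Hermite polynomial. -/
noncomputable def HR (n : ℕ) : Polynomial ℝ := (hermite n).map (Int.castRingHom ℝ)

lemma HR_zero : HR 0 = 1 := by simp [HR, hermite_zero]

lemma HR_succ (n : ℕ) : HR (n + 1) = X * HR n - derivative (HR n) := by
  unfold HR
  rw [hermite_succ, Polynomial.map_sub, Polynomial.map_mul, map_X, derivative_map]

lemma aeval_hermite_eq (x : ℝ) (n : ℕ) : aeval x (hermite n) = eval x (HR n) := by
  rw [HR, aeval_def, eval_map, eval₂_eq_eval_map, eval_map]
  rfl

lemma HR_derivative (n : ℕ) : derivative (HR (n + 1)) = C ((n : ℝ) + 1) * HR n := by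
  induction n with
  | zero => rw [HR_succ, HR_zero]; simp
  | succ n ih =>
    rw [HR_succ (n+1), derivative_sub, derivative_mul, derivative_X, one_mul, ih,
      derivative_C_mul]
    have hdn : derivative (HR n) = X * HR n - HR (n + 1) := by rw [HR_succ n]; ring
    rw [hdn]
    have hc : C ((((n+1):ℕ) : ℝ) + 1) = C ((n:ℝ) + 1) + 1 := by
      push_cast
      rw [show ((n:ℝ) + 1 + 1) = ((n:ℝ) + 1) + 1 from rfl, C_add, C_1]
    rw [hc]
    ring

/-- one-variable coefficient functional -/
noncomputable def Ls (p : Polynomial ℝ) (d : ℕ) : ℝ :=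
  ∑ i ∈ Finset.range d, p.coeff i * gm i

lemma Ls_congr (p : Polynomial ℝ) {d d' : ℕ} (h : p.natDegree < d) (h' : p.natDegree < d') :
    Ls p d = Ls p d' := by
  wlog hdd : d ≤ d'
  · exact (this p h' h (by omega)).symm
  unfold Ls
  rw [← Finset.sum_subset (Finset.range_subset_range.2 hdd)]
  intro x hx hnx
  rw [coeff_eq_zero_of_natDegree_lt, zero_mul]
  simp only [Finset.mem_range] at hx hnx ⊢
  omega

lemma gm_succ (i : ℕ) : gm (i + 1) = (i : ℝ) * gm (i - 1) := by
  cases i with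
  | zero => simp [gm]
  | succ n =>
    rw [show gm (n + 2) = ((n:ℝ) + 1) * gm n from rfl]
    push_cast
    simp

lemma Ls_X_mul (p : Polynomial ℝ) (d : ℕ) : Ls (X * p) (d + 2) = Ls (derivative p) d := by
  unfold Ls
  rw [Finset.sum_range_succ']
  simp only [mul_coeff_zero, coeff_X_zero, zero_mul, add_zero]
  have h1 : ∀ i, (X * p).coeff (i+1) * gm (i+1) = p.coeff i * ((i:ℝ) * gm (i - 1)) := by
    intro i; rw [coeff_X_mul, gm_succ]
  rw [Finset.sum_congr rfl (fun i _ => h1 i), Finset.sum_range_succ']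
  simp only [Nat.cast_zero, zero_mul, mul_zero, add_zero, Nat.add_sub_cancel]
  apply Finset.sum_congr rfl
  intro i _
  rw [coeff_derivative]
  push_cast
  ring

lemma HR_natDegree (n : ℕ) : (HR n).natDegree = n := by
  unfold HR
  rw [natDegree_map_eq_of_injective Int.cast_injective]
  exact natDegree_hermite

lemma Ls_hermite (n d : ℕ) (h : n < d) : Ls (HR n) d = if n = 0 then 1 else 0 := by
  cases n with
  | zero =>
    rw [Ls_congr (HR 0) (d' := 1) (by rw [HR_natDegree]; omega) (by rw [HR_natDegree]; omega)]
    simp [Ls, HR_zero]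
  | succ n =>
    have hsub : Ls (HR (n+1)) d = Ls (X * HR n) d - Ls (derivative (HR n)) d := by
      unfold Ls
      rw [← Finset.sum_sub_distrib]
      apply Finset.sum_congr rfl
      intro i _
      rw [HR_succ, coeff_sub]
      ring
    have hdeg : (derivative (HR n)).natDegree ≤ n := by
      apply le_trans (natDegree_derivative_le _)
      rw [HR_natDegree]
      omega
    have hXdeg : (X * HR n).natDegree ≤ n + 1 := by
      apply le_trans natDegree_mul_le
      rw [natDegree_X, HR_natDegree]
      omega
    rw [hsub,
      Ls_congr (X * HR n) (d' := n + 3) (by omega) (by omega),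
      Ls_congr (derivative (HR n)) (d' := n + 1) (by omega) (by omega),
      show n + 3 = (n + 1) + 2 from rfl, Ls_X_mul]
    simp

noncomputable def Bs (M : ℕ → ℕ → ℝ) (p q : Polynomial ℝ) (dp dq : ℕ) : ℝ :=
  ∑ i ∈ Finset.range dp, ∑ j ∈ Finset.range dq, p.coeff i * q.coeff j * M i j

lemma Bs_mono (M : ℕ → ℕ → ℝ) {p q : Polynomial ℝ} {dp dq dp' dq' : ℕ}
    (hdp : p.natDegree < dp) (hdq : q.natDegree < dq) (h1 : dp ≤ dp') (h2 : dq ≤ dq') :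
    Bs M p q dp' dq' = Bs M p q dp dq := by
  unfold Bs
  rw [← Finset.sum_subset (Finset.range_subset_range.2 h1) (fun x hx hnx => by
    simp only [Finset.mem_range] at hx hnx
    have : p.coeff x = 0 := coeff_eq_zero_of_natDegree_lt (by omega)
    simp [this])]
  apply Finset.sum_congr rfl
  intro i _
  rw [← Finset.sum_subset (Finset.range_subset_range.2 h2) (fun x hx hnx => by
    simp only [Finset.mem_range] at hx hnx
    have : q.coeff x = 0 := coeff_eq_zero_of_natDegree_lt (by omega)
    simp [this])]

lemma Bs_congr (M : ℕ → ℕ → ℝ) {p q : Polynomial ℝ} {dp dq dp' dq' : ℕ}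
    (hdp : p.natDegree < dp) (hdq : q.natDegree < dq)
    (hdp' : p.natDegree < dp') (hdq' : q.natDegree < dq') :
    Bs M p q dp dq = Bs M p q dp' dq' := by
  rw [← Bs_mono M hdp hdq (le_max_left dp dp') (le_max_left dq dq'),
    Bs_mono M hdp' hdq' (le_max_right dp dp') (le_max_right dq dq')]

lemma Bs_stein (M : ℕ → ℕ → ℝ) (ρ : ℝ)
    (hM : ∀ j k : ℕ, M j (k+1) = (k:ℝ) * M j (k-1) + (j:ℝ) * ρ * M (j-1) k)
    (p q : Polynomial ℝ) (dp dq : ℕ) :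
    Bs M p (X * q) (dp+1) (dq+2)
      = Bs M p (derivative q) (dp+1) dq + ρ * Bs M (derivative p) q dp (dq+1) := by
  unfold Bs
  have inner : ∀ i : ℕ, (∑ j ∈ Finset.range (dq+2), p.coeff i * (X*q).coeff j * M i j)
      = (∑ j ∈ Finset.range dq, p.coeff i * (derivative q).coeff j * M i j)
        + ∑ j ∈ Finset.range (dq+1), (i:ℝ) * ρ * (p.coeff i * q.coeff j * M (i-1) j) := by
    intro i
    rw [Finset.sum_range_succ']
    simp only [mul_coeff_zero, coeff_X_zero, zero_mul, mul_zero, add_zero]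
    have e : ∀ j : ℕ, p.coeff i * (X*q).coeff (j+1) * M i (j+1)
        = p.coeff i * q.coeff j * ((j:ℝ) * M i (j-1))
          + (i:ℝ) * ρ * (p.coeff i * q.coeff j * M (i-1) j) := by
      intro j; rw [coeff_X_mul, hM i j]; ring
    rw [Finset.sum_congr rfl fun j _ => e j, Finset.sum_add_distrib]
    congr 1
    rw [Finset.sum_range_succ']
    simp only [Nat.cast_zero, zero_mul, mul_zero, add_zero, Nat.add_sub_cancel]
    apply Finset.sum_congr rfl
    intro j _
    rw [coeff_derivative]
    push_cast
    ring
  rw [Finset.sum_congr rfl fun i _ => inner i, Finset.sum_add_distrib]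
  congr 1
  rw [Finset.sum_range_succ']
  simp only [Nat.cast_zero, zero_mul, Finset.sum_const_zero, add_zero, Nat.add_sub_cancel]
  rw [Finset.mul_sum]
  apply Finset.sum_congr rfl
  intro i _
  rw [Finset.mul_sum]
  apply Finset.sum_congr rfl
  intro j _
  rw [coeff_derivative]
  push_cast
  ring

lemma abs_pow_mul_pow_le (x y : ℝ) (j k : ℕ) :
    |x ^ j * y ^ k| ≤ (1 + x ^ (2 * (j + k))) + (1 + y ^ (2 * (j + k))) := by
  have h1 : ∀ z : ℝ, |z| ^ (j + k) ≤ 1 + z ^ (2 * (j + k)) := by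
    intro z
    have hz2 : (0:ℝ) ≤ z ^ (2 * (j + k)) := by rw [pow_mul]; positivity
    rcases le_total |z| 1 with h | h
    · have h2 : |z| ^ (j + k) ≤ 1 := pow_le_one₀ (abs_nonneg z) h
      linarith
    · have h2 : |z| ^ (j + k) ≤ |z| ^ (2 * (j + k)) := pow_le_pow_right₀ h (by omega)
      have h3 : |z| ^ (2 * (j + k)) = z ^ (2 * (j + k)) := by
        rw [← abs_pow, abs_of_nonneg hz2]
      linarith
  have h0 : |x ^ j * y ^ k| = |x| ^ j * |y| ^ k := by rw [abs_mul, abs_pow, abs_pow]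
  have hmain : |x| ^ j * |y| ^ k ≤ |x| ^ (j + k) + |y| ^ (j + k) := by
    rcases le_total |x| |y| with h | h
    · have h2 : |x| ^ j * |y| ^ k ≤ |y| ^ j * |y| ^ k :=
        mul_le_mul_of_nonneg_right (pow_le_pow_left₀ (abs_nonneg x) h j)
          (pow_nonneg (abs_nonneg y) k)
      rw [← pow_add] at h2
      have h3 : (0:ℝ) ≤ |x| ^ (j + k) := pow_nonneg (abs_nonneg x) _
      linarith
    · have h2 : |x| ^ j * |y| ^ k ≤ |x| ^ j * |x| ^ k :=
        mul_le_mul_of_nonneg_left (pow_le_pow_left₀ (abs_nonneg y) h k)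
          (pow_nonneg (abs_nonneg x) j)
      rw [← pow_add] at h2
      have h3 : (0:ℝ) ≤ |y| ^ (j + k) := pow_nonneg (abs_nonneg y) _
      linarith
  linarith [h1 x, h1 y]

/-- If `X` and `Y` are jointly Gaussian standard normal random variables with
correlation `ρ = E[XY]` (jointly Gaussian meaning that every linear combination
`sX + tY` is Gaussian, with the variance `s² + 2stρ + t²` dictated by unit
variances and covariance `ρ`), then `E[Hₙ(X) Hₘ(Y)] = δ_{n,m} · n! · ρⁿ`,
where `Hₙ` is the `n`th probabilists' Hermite polynomial. -/
theorem hermite_orthogonality_gaussian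
    {Ω : Type*} [MeasurableSpace Ω] (μ : Measure Ω) [IsProbabilityMeasure μ]
    (X Y : Ω → ℝ) (ρ : ℝ)
    (hGauss : ∀ s t : ℝ, Measure.map (fun ω => s * X ω + t * Y ω) μ =
      gaussianReal 0 (Real.toNNReal (s ^ 2 + 2 * s * t * ρ + t ^ 2)))
    (hρ : ρ = ∫ ω, X ω * Y ω ∂μ) (n m : ℕ) :
    ∫ ω, (aeval (X ω) (hermite n)) * (aeval (Y ω) (hermite m)) ∂μ =
      if n = m then (n.factorial : ℝ) * ρ ^ n else 0 := by
  classical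
  -- measurability of X and Y
  have hXae : AEMeasurable X μ := by
    by_contra hX
    have h10 := hGauss 1 0
    rw [show (fun ω => (1:ℝ) * X ω + (0:ℝ) * Y ω) = X from by funext ω; ring] at h10
    rw [Measure.map_of_not_aemeasurable hX] at h10
    have h0 := congrArg (fun ν : Measure ℝ => ν Set.univ) h10
    simp [measure_univ] at h0
  have hYae : AEMeasurable Y μ := by
    by_contra hY
    have h01 := hGauss 0 1
    rw [show (fun ω => (0:ℝ) * X ω + (1:ℝ) * Y ω) = Y from by funext ω; ring] at h01
    rw [Measure.map_of_not_aemeasurable hY] at h01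
    have h0 := congrArg (fun ν : Measure ℝ => ν Set.univ) h01
    simp [measure_univ] at h0
  -- the law of X + t Y
  have hmapZ : ∀ t : ℝ, Measure.map (fun ω => X ω + t * Y ω) μ
      = gaussianReal 0 (Real.toNNReal (1 + 2*t*ρ + t^2)) := by
    intro t
    have h := hGauss 1 t
    rw [show (fun ω => (1:ℝ) * X ω + t * Y ω) = (fun ω => X ω + t * Y ω)
      from by funext ω; ring] at h
    rw [show (1:ℝ)^2 + 2*1*t*ρ + t^2 = 1 + 2*t*ρ + t^2 from by ring] at h
    exact h
  have hmapY : Measure.map Y μ = gaussianReal 0 1 := by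
    have h := hGauss 0 1
    rw [show (fun ω => (0:ℝ) * X ω + (1:ℝ) * Y ω) = Y from by funext ω; ring] at h
    rw [show (0:ℝ)^2 + 2*0*1*ρ + 1^2 = 1 from by ring] at h
    simpa using h
  have hZae : ∀ t : ℝ, AEMeasurable (fun ω => X ω + t * Y ω) μ :=
    fun t => hXae.add (hYae.const_mul t)
  -- integrability and moments of linear combinations
  have hZint : ∀ (t : ℝ) (N : ℕ), Integrable (fun ω => (X ω + t * Y ω)^N) μ := by
    intro t N
    have h := integrable_pow_gaussianReal (Real.toNNReal (1+2*t*ρ+t^2)) N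
    rw [← hmapZ t] at h
    have h2 := (integrable_map_measure
      (by exact (measurable_id.pow_const N).aestronglyMeasurable) (hZae t)).mp h
    exact h2
  have hZval : ∀ (t : ℝ) (N : ℕ), ∫ ω, (X ω + t * Y ω)^N ∂μ
      = (√(((Real.toNNReal (1+2*t*ρ+t^2) : ℝ≥0)) : ℝ))^N * gm N := by
    intro t N
    have h := integral_map (hZae t)
      (f := fun x : ℝ => x^N) (by exact (measurable_id.pow_const N).aestronglyMeasurable)
    rw [hmapZ t, integral_pow_gaussianReal] at h
    exact h.symm
  -- marginal moments
  have hXint : ∀ N : ℕ, Integrable (fun ω => X ω ^ N) μ := by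
    intro N
    have := hZint 0 N
    simpa using this
  have hXval : ∀ N : ℕ, ∫ ω, X ω ^ N ∂μ = gm N := by
    intro N
    have h := hZval 0 N
    simp only [zero_mul, mul_zero, add_zero] at h
    norm_num at h
    simpa using h
  have hYint : ∀ N : ℕ, Integrable (fun ω => Y ω ^ N) μ := by
    intro N
    have h := integrable_pow_gaussianReal 1 N
    rw [← hmapY] at h
    exact (integrable_map_measure
      (by exact (measurable_id.pow_const N).aestronglyMeasurable) hYae).mp h
  have hYval : ∀ N : ℕ, ∫ ω, Y ω ^ N ∂μ = gm N := by
    intro N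
    have h := integral_map hYae
      (f := fun x : ℝ => x^N) (by exact (measurable_id.pow_const N).aestronglyMeasurable)
    rw [hmapY, integral_pow_gaussianReal] at h
    simpa using h.symm
  -- integrability of mixed monomials
  have hMint : ∀ j k : ℕ, Integrable (fun ω => X ω ^ j * Y ω ^ k) μ := by
    intro j k
    apply Integrable.mono'
      (g := fun ω => (1 + X ω ^ (2*(j+k))) + (1 + Y ω ^ (2*(j+k))))
    · exact ((integrable_const 1).add (hXint (2*(j+k)))).add
        ((integrable_const 1).add (hYint (2*(j+k))))
    · exact ((hXae.pow_const j).mul (hYae.pow_const k)).aestronglyMeasurable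
    · filter_upwards with ω
      rw [Real.norm_eq_abs]
      exact abs_pow_mul_pow_le _ _ j k
  set M : ℕ → ℕ → ℝ := fun j k => ∫ ω, X ω ^ j * Y ω ^ k ∂μ with hMdef
  -- nonnegativity of the variance
  have hv : ∀ t : ℝ, 0 ≤ 1 + 2*t*ρ + t^2 := by
    intro t
    have e : ∀ ω, (X ω + t * Y ω)^2
        = X ω ^ 2 + (2*t) * (X ω ^ 1 * Y ω ^ 1) + t^2 * Y ω ^ 2 := by
      intro ω; ring
    have h2 : ∫ ω, (X ω + t * Y ω)^2 ∂μ = 1 + 2*t*ρ + t^2 := by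
      rw [integral_congr_ae (Filter.Eventually.of_forall e)]
      have hf1 : Integrable (fun ω => X ω ^ 2 + 2*t*(X ω ^ 1 * Y ω ^ 1)) μ :=
        (hXint 2).add ((hMint 1 1).const_mul (2*t))
      have hf2 : Integrable (fun ω => t^2 * Y ω ^ 2) μ := (hYint 2).const_mul (t^2)
      rw [integral_add hf1 hf2, integral_add (hXint 2) ((hMint 1 1).const_mul (2*t)),
        integral_const_mul, integral_const_mul, hXval 2, hYval 2]
      have hXY : ∫ ω, X ω ^ 1 * Y ω ^ 1 ∂μ = ρ := by
        simp only [pow_one]; exact hρ.symm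
      rw [hXY, show gm 2 = 1 from by norm_num [gm]]
      ring
    have h2' := hZval t 2
    rw [h2, show gm 2 = 1 from by norm_num [gm], mul_one,
      Real.sq_sqrt (NNReal.coe_nonneg _)] at h2'
    rw [h2']
    exact NNReal.coe_nonneg _
  have hZval' : ∀ (t : ℝ) (N : ℕ), ∫ ω, (X ω + t * Y ω)^N ∂μ
      = (√(1 + 2*t*ρ + t^2))^N * gm N := by
    intro t N
    rw [hZval t N, Real.coe_toNNReal _ (hv t)]
  -- binomial sum form
  have hsum : ∀ (t : ℝ) (N : ℕ), ∫ ω, (X ω + t * Y ω)^N ∂μ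
      = ∑ k ∈ Finset.range (N+1), ((N.choose k : ℕ):ℝ) * t^k * M (N-k) k := by
    intro t N
    have e : ∀ ω, (X ω + t * Y ω)^N
        = ∑ k ∈ Finset.range (N+1), ((N.choose k : ℕ):ℝ) * t^k * (X ω ^ (N-k) * Y ω ^ k) := by
      intro ω
      rw [add_pow, ← Finset.sum_range_reflect]
      apply Finset.sum_congr rfl
      intro k hk
      simp only [Finset.mem_range] at hk
      have hkN : k ≤ N := by omega
      rw [show N + 1 - 1 - k = N - k from by omega, Nat.sub_sub_self hkN,
        Nat.choose_symm hkN, mul_pow]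
      ring
    rw [integral_congr_ae (Filter.Eventually.of_forall e),
      integral_finset_sum _ (fun k _ => ((hMint (N-k) k).const_mul _))]
    apply Finset.sum_congr rfl
    intro k _
    rw [integral_const_mul]
  -- coefficient identity
  have hcoeff : ∀ j k : ℕ, (((j+k).choose k : ℕ):ℝ) * M j k = (pP ρ (j+k)).coeff k := by
    intro j k
    have hPeq : (∑ i ∈ Finset.range ((j+k)+1),
        C ((((j+k).choose i : ℕ):ℝ) * M ((j+k)-i) i) * Polynomial.X^i : Polynomial ℝ) = pP ρ (j+k) := by
      apply Polynomial.funext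
      intro t
      rw [eval_finset_sum]
      simp only [eval_mul, eval_C, eval_pow, eval_X]
      rw [pP_eval ρ t (hv t) (j+k), ← hZval' t (j+k), hsum t (j+k)]
      apply Finset.sum_congr rfl
      intro i _
      ring
    have hco := congrArg (fun f => Polynomial.coeff f k) hPeq
    rw [finset_sum_coeff] at hco
    rw [Finset.sum_eq_single k (fun b _ hbk => by
        rw [coeff_C_mul, coeff_X_pow, if_neg (fun h => hbk h.symm), mul_zero])
      (fun hk' => absurd (Finset.mem_range.2 (by omega)) hk')] at hco
    rw [coeff_C_mul, coeff_X_pow, if_pos rfl, mul_one] at hco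
    rw [show (j+k) - k = j from by omega] at hco
    exact hco
  have hstein := stein_of_coeff ρ M hcoeff
  -- marginal identities for M
  have hM0 : ∀ i : ℕ, M i 0 = gm i := by
    intro i
    have : M i 0 = ∫ ω, X ω ^ i ∂μ := by
      rw [hMdef]
      simp only [pow_zero, mul_one]
    rw [this, hXval]
  have h0M : ∀ i : ℕ, M 0 i = gm i := by
    intro i
    have h := hcoeff 0 i
    rw [show (0+i) = i from by omega, Nat.choose_self] at h
    simp only [Nat.cast_one, one_mul] at h
    rw [h, pP_coeff_top]
  -- linking integrals with Bs
  have hBval : ∀ (p q : Polynomial ℝ) (dp dq : ℕ), p.natDegree < dp → q.natDegree < dq →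
      ∫ ω, eval (X ω) p * eval (Y ω) q ∂μ = Bs M p q dp dq := by
    intro p q dp dq hdp hdq
    have e : ∀ ω, eval (X ω) p * eval (Y ω) q
        = ∑ i ∈ Finset.range dp, ∑ j ∈ Finset.range dq,
            p.coeff i * q.coeff j * (X ω ^ i * Y ω ^ j) := by
      intro ω
      rw [eval_eq_sum_range' hdp, eval_eq_sum_range' hdq, Finset.sum_mul_sum]
      apply Finset.sum_congr rfl
      intro i _
      apply Finset.sum_congr rfl
      intro j _
      ring
    rw [integral_congr_ae (Filter.Eventually.of_forall e),
      integral_finset_sum _ (fun i _ =>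
        integrable_finset_sum _ (fun j _ => (hMint i j).const_mul _))]
    apply Finset.sum_congr rfl
    intro i _
    rw [integral_finset_sum _ (fun j _ => (hMint i j).const_mul _)]
    apply Finset.sum_congr rfl
    intro j _
    rw [integral_const_mul]
  have hPQint : ∀ p q : Polynomial ℝ,
      Integrable (fun ω => eval (X ω) p * eval (Y ω) q) μ := by
    intro p q
    have e : ∀ ω, eval (X ω) p * eval (Y ω) q
        = ∑ i ∈ Finset.range (p.natDegree+1), ∑ j ∈ Finset.range (q.natDegree+1),
            p.coeff i * q.coeff j * (X ω ^ i * Y ω ^ j) := by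
      intro ω
      rw [eval_eq_sum_range' (n := p.natDegree+1) (by omega),
        eval_eq_sum_range' (n := q.natDegree+1) (by omega), Finset.sum_mul_sum]
      apply Finset.sum_congr rfl
      intro i _
      apply Finset.sum_congr rfl
      intro j _
      ring
    have hI : Integrable (fun ω => ∑ i ∈ Finset.range (p.natDegree+1),
        ∑ j ∈ Finset.range (q.natDegree+1),
          p.coeff i * q.coeff j * (X ω ^ i * Y ω ^ j)) μ :=
      integrable_finset_sum _ (fun i _ =>
        integrable_finset_sum _ (fun j _ => (hMint i j).const_mul _))
    exact hI.congr (Filter.Eventually.of_forall (fun ω => (e ω).symm))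
  -- marginal polynomial integrals
  have hLX : ∀ (p : Polynomial ℝ) (d : ℕ), p.natDegree < d →
      ∫ ω, eval (X ω) p ∂μ = Ls p d := by
    intro p d hd
    have e : ∀ ω, eval (X ω) p = ∑ i ∈ Finset.range d, p.coeff i * X ω ^ i :=
      fun ω => eval_eq_sum_range' hd _
    rw [integral_congr_ae (Filter.Eventually.of_forall e),
      integral_finset_sum _ (fun i _ => (hXint i).const_mul _)]
    unfold Ls
    apply Finset.sum_congr rfl
    intro i _
    rw [integral_const_mul, hXval]
  have hLY : ∀ (p : Polynomial ℝ) (d : ℕ), p.natDegree < d →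
      ∫ ω, eval (Y ω) p ∂μ = Ls p d := by
    intro p d hd
    have e : ∀ ω, eval (Y ω) p = ∑ i ∈ Finset.range d, p.coeff i * Y ω ^ i :=
      fun ω => eval_eq_sum_range' hd _
    rw [integral_congr_ae (Filter.Eventually.of_forall e),
      integral_finset_sum _ (fun i _ => (hYint i).const_mul _)]
    unfold Ls
    apply Finset.sum_congr rfl
    intro i _
    rw [integral_const_mul, hYval]
  -- Stein recurrence at the integral level
  have hR0 : ∀ p q : Polynomial ℝ, ∫ ω, eval (X ω) p * eval (Y ω) (Polynomial.X * q) ∂μ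
      = (∫ ω, eval (X ω) p * eval (Y ω) (derivative q) ∂μ)
        + ρ * ∫ ω, eval (X ω) (derivative p) * eval (Y ω) q ∂μ := by
    intro p q
    have hdq1 : (Polynomial.X * q).natDegree ≤ 1 + q.natDegree :=
      le_trans natDegree_mul_le (by rw [Polynomial.natDegree_X])
    have hdq2 : (derivative q).natDegree ≤ q.natDegree :=
      le_trans (natDegree_derivative_le q) (Nat.sub_le _ _)
    have hdp2 : (derivative p).natDegree ≤ p.natDegree :=
      le_trans (natDegree_derivative_le p) (Nat.sub_le _ _)
    rw [hBval p (Polynomial.X*q) ((p.natDegree+1)+1) ((q.natDegree+1)+2) (by omega)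
        (lt_of_le_of_lt hdq1 (by omega)),
      Bs_stein M ρ hstein p q (p.natDegree+1) (q.natDegree+1),
      ← hBval p (derivative q) ((p.natDegree+1)+1) (q.natDegree+1) (by omega)
        (lt_of_le_of_lt hdq2 (by omega)),
      ← hBval (derivative p) q (p.natDegree+1) ((q.natDegree+1)+1)
        (lt_of_le_of_lt hdp2 (by omega)) (by omega)]
  have hR1 : ∀ (p : Polynomial ℝ) (m : ℕ),
      ∫ ω, eval (X ω) p * eval (Y ω) (HR (m+1)) ∂μ
      = ρ * ∫ ω, eval (X ω) (derivative p) * eval (Y ω) (HR m) ∂μ := by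
    intro p m
    have e : ∀ ω, eval (X ω) p * eval (Y ω) (HR (m+1))
        = eval (X ω) p * eval (Y ω) (Polynomial.X * HR m)
          - eval (X ω) p * eval (Y ω) (derivative (HR m)) := by
      intro ω
      rw [HR_succ, eval_sub]
      ring
    rw [integral_congr_ae (Filter.Eventually.of_forall e),
      integral_sub (hPQint _ _) (hPQint _ _), hR0 p (HR m)]
    ring
  -- the main induction
  have main : ∀ m n : ℕ, ∫ ω, eval (X ω) (HR n) * eval (Y ω) (HR m) ∂μ
      = if n = m then (n.factorial : ℝ) * ρ^n else 0 := by
    intro m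
    induction m with
    | zero =>
      intro n
      have e : ∀ ω, eval (X ω) (HR n) * eval (Y ω) (HR 0) = eval (X ω) (HR n) := by
        intro ω
        rw [HR_zero, eval_one, mul_one]
      rw [integral_congr_ae (Filter.Eventually.of_forall e),
        hLX (HR n) (n+1) (by rw [HR_natDegree]; omega),
        Ls_hermite n (n+1) (by omega)]
      rcases Nat.eq_zero_or_pos n with h | h
      · subst h; simp
      · rw [if_neg (by omega), if_neg (by omega)]
    | succ m ih =>
      intro n
      cases n with
      | zero =>
        have e : ∀ ω, eval (X ω) (HR 0) * eval (Y ω) (HR (m+1)) = eval (Y ω) (HR (m+1)) := by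
          intro ω
          rw [HR_zero, eval_one, one_mul]
        rw [integral_congr_ae (Filter.Eventually.of_forall e),
          hLY (HR (m+1)) (m+2) (by rw [HR_natDegree]; omega),
          Ls_hermite (m+1) (m+2) (by omega)]
        rw [if_neg (by omega), if_neg (by omega)]
      | succ n =>
        rw [hR1 (HR (n+1)) m, HR_derivative n]
        have e : ∀ ω, eval (X ω) (C ((n:ℝ)+1) * HR n) * eval (Y ω) (HR m)
            = ((n:ℝ)+1) * (eval (X ω) (HR n) * eval (Y ω) (HR m)) := by
          intro ω
          rw [eval_mul, eval_C]
          ring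
        rw [integral_congr_ae (Filter.Eventually.of_forall e), integral_const_mul, ih n]
        by_cases h : n = m
        · subst h
          rw [if_pos rfl, if_pos rfl, Nat.factorial_succ]
          push_cast
          ring
        · rw [if_neg h, if_neg (by omega)]
          ring
  have efin : ∀ ω, (aeval (X ω) (hermite n)) * (aeval (Y ω) (hermite m))
      = eval (X ω) (HR n) * eval (Y ω) (HR m) := by
    intro ω
    rw [aeval_hermite_eq, aeval_hermite_eq]
  rw [integral_congr_ae (Filter.Eventually.of_forall efin)]
  exact main m n
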